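/- Let k > 1 and κ > 1 be real numbers and let Ψ : ℝ → ℝ be a continuous, strictly increasing surjection with Ψ(0) = 0, Ψ(1) = 1, Ψ(−1) = −1, satisfying Ψ(k·x) = κ·Ψ(x) for all x ∈ ℝ. Then for every t > 0, κ⁻¹ ≤ (Ψ(0) − Ψ(−t))/(Ψ(t) − Ψ(0)) ≤ κ, i.e. κ⁻¹ ≤ −Ψ(−t)/Ψ(t) ≤ κ. -/

import Mathlib

/-- Step (iv) (the case `x = 0`) of the quasi-symmetry proof in the gluing lemma:
`κ⁻¹ ≤ (Ψ 0 - Ψ (-t)) / (Ψ t - Ψ 0) ≤ κ` for every `t > 0`. -/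
theorem quasisymmetry_ratio_at_zero (k κ : ℝ) (hk : 1 < k) (hκ : 1 < κ)
    (Ψ : ℝ → ℝ) (hcont : Continuous Ψ) (hmono : StrictMono Ψ)
    (hsurj : Function.Surjective Ψ)
    (h0 : Ψ 0 = 0) (h1 : Ψ 1 = 1) (hm1 : Ψ (-1) = -1)
    (hfun : ∀ x : ℝ, Ψ (k * x) = κ * Ψ x) :
    ∀ t : ℝ, 0 < t →
      κ⁻¹ ≤ (Ψ 0 - Ψ (-t)) / (Ψ t - Ψ 0) ∧
        (Ψ 0 - Ψ (-t)) / (Ψ t - Ψ 0) ≤ κ := by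
  have hκ0 : (0:ℝ) < κ := lt_trans one_pos hκ
  have hk0 : (0:ℝ) < k := lt_trans one_pos hk
  have hz : ∀ n : ℤ, ∀ x : ℝ, Ψ (k ^ n * x) = κ ^ n * Ψ x := by
    intro n
    induction n using Int.induction_on with
    | zero => intro x; simp
    | succ n ih =>
      intro x
      have h1' : k ^ ((n:ℤ)+1) * x = k * (k ^ (n:ℤ) * x) := by
        rw [zpow_add_one₀ hk0.ne']; ring
      rw [h1', hfun, ih, zpow_add_one₀ hκ0.ne']; ring
    | pred n ih =>
      intro x
      have h1' : k * (k ^ (-(n:ℤ)-1) * x) = k ^ (-(n:ℤ)) * x := by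
        rw [show (-(n:ℤ)) = (-(n:ℤ)-1)+1 by ring, zpow_add_one₀ hk0.ne']; ring
      have h2' := hfun (k ^ (-(n:ℤ)-1) * x)
      rw [h1', ih] at h2'
      have : Ψ (k ^ (-(n:ℤ)-1) * x) = κ⁻¹ * (κ ^ (-(n:ℤ)) * Ψ x) := by
        field_simp at h2' ⊢; linarith
      rw [this, show (-(n:ℤ)) = (-(n:ℤ)-1)+1 by ring, zpow_add_one₀ hκ0.ne']
      field_simp
      ring
  intro t ht
  obtain ⟨n, hn⟩ := exists_mem_Ico_zpow ht hk
  have hkn : (0:ℝ) < k ^ n := zpow_pos hk0 n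
  set s := t / k ^ n with hs
  have hts : t = k ^ n * s := by rw [hs]; field_simp
  have hs1 : 1 ≤ s := (one_le_div hkn).2 hn.1
  have hsk : s < k := by
    rw [hs, div_lt_iff₀ hkn]
    calc t < k ^ (n+1) := hn.2
    _ = k * k ^ n := by rw [zpow_add_one₀ hk0.ne']; ring
  have hΨt : Ψ t = κ ^ n * Ψ s := by rw [hts, hz]
  have hΨmt : Ψ (-t) = κ ^ n * Ψ (-s) := by
    rw [hts, show -(k ^ n * s) = k ^ n * (-s) by ring, hz]
  -- bounds on Ψ s and Ψ (-s)
  have hΨs1 : 1 ≤ Ψ s := h1 ▸ hmono.monotone hs1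
  have hΨsk : Ψ s ≤ κ := by
    have : Ψ s ≤ Ψ k := hmono.monotone hsk.le
    have hk1 : Ψ k = κ := by have := hfun 1; simpa [h1] using this
    linarith
  have hΨms1 : Ψ (-s) ≤ -1 := by
    have : Ψ (-s) ≤ Ψ (-1) := hmono.monotone (by linarith)
    linarith [hm1 ▸ this]
  have hΨmsk : -κ ≤ Ψ (-s) := by
    have hkm : Ψ (-k) = -κ := by
      have := hfun (-1); rw [hm1] at this
      simpa [mul_comm] using this
    have : Ψ (-k) ≤ Ψ (-s) := hmono.monotone (by linarith)
    linarith
  have hΨs0 : (0:ℝ) < Ψ s := by linarith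
  have hκn : (0:ℝ) < κ ^ n := zpow_pos hκ0 n
  have hratio : (Ψ 0 - Ψ (-t)) / (Ψ t - Ψ 0) = -Ψ (-s) / Ψ s := by
    rw [h0, hΨt, hΨmt]
    field_simp
    ring
  rw [hratio]
  constructor
  · rw [le_div_iff₀ hΨs0]
    have : κ⁻¹ * Ψ s ≤ κ⁻¹ * κ := by
      apply mul_le_mul_of_nonneg_left hΨsk (by positivity)
    rw [inv_mul_cancel₀ hκ0.ne'] at this
    linarith
  · rw [div_le_iff₀ hΨs0]
    nlinarith
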